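/- (Moore bound, odd girth parameter) Any (r+1)-regular graph with girth at least t+1, where t = 2s+1 is odd, has at least 2∑_{i=0}^{s} r^i vertices. -/

import Mathlib

namespace MooreAux

open SimpleGraph Walk

variable {V : Type*} {G : SimpleGraph V}

/-- In a path from `v` to `u`, if the edge `{u,v}` appears, the path has length 1. -/
lemma edge_start_path_length {u v : V} (hne : u ≠ v) (p : G.Walk v u) (hp : p.IsPath)
    (he : s(u, v) ∈ p.edges) : p.length = 1 := by
  cases p with
  | nil => simp at he
  | @cons _ c _ h' p' =>
    rw [Walk.edges_cons, List.mem_cons] at he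
    rcases he with he | he
    · rw [Sym2.eq_iff] at he
      rcases he with ⟨h1, _⟩ | ⟨h1, _⟩
      · exact absurd h1 hne
      · subst h1
        have hnil : p' = Walk.nil := Walk.isPath_iff_eq_nil.mp
          ((Walk.cons_isPath_iff _ _).mp hp).1
        simp [hnil]
    · have hmem : v ∈ p'.support := p'.snd_mem_support_of_mem_edges he
      exact absurd hmem ((Walk.cons_isPath_iff _ _).mp hp).2

/-- Split off a closed subwalk when the start vertex reappears. -/
lemma split_closed [DecidableEq V] {x u : V} (q : G.Walk x u) (hx2 : x ∈ q.support.tail) :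
    ∃ (c : G.Walk x x) (rest : G.Walk x u),
      1 ≤ c.length ∧ c.length + rest.length = q.length := by
  cases q with
  | nil => simp at hx2
  | @cons _ y _ h2 p3 =>
    rw [Walk.support_cons, List.tail_cons] at hx2
    refine ⟨Walk.cons h2 (p3.takeUntil x hx2), p3.dropUntil x hx2, by simp, ?_⟩
    have hsp : (p3.takeUntil x hx2).length + (p3.dropUntil x hx2).length = p3.length := by
      rw [← Walk.length_append, p3.take_spec hx2]
    simp only [Walk.length_cons]
    omega

/-- A closed walk of odd length contains a cycle of length at most that of the walk. -/
lemma exists_cycle_of_odd_closed_walk [DecidableEq V] :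
    ∀ n : ℕ, Odd n → ∀ {u : V} (w : G.Walk u u), w.length = n →
      ∃ (x : V) (c : G.Walk x x), c.IsCycle ∧ c.length ≤ n := by
  intro n
  induction n using Nat.strong_induction_on with
  | _ n ih =>
    intro hodd u w hlen
    rw [Nat.odd_iff] at hodd
    cases w with
    | nil => rw [Walk.length_nil] at hlen; omega
    | @cons _ v _ h p =>
      rw [Walk.length_cons] at hlen
      by_cases hnd : p.support.Nodup
      · by_cases he : s(u, v) ∈ p.edges
        · have h1 : p.length = 1 :=
            edge_start_path_length (G.ne_of_adj h) p (Walk.IsPath.mk' hnd) he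
          omega
        · exact ⟨u, Walk.cons h p, (Walk.cons_isCycle_iff p h).mpr ⟨Walk.IsPath.mk' hnd, he⟩,
            by rw [Walk.length_cons]; omega⟩
      · obtain ⟨x, hdup⟩ := List.exists_duplicate_iff_not_nodup.mpr hnd
        have hx : x ∈ p.support := hdup.mem
        have hcount : 2 ≤ p.support.count x := List.duplicate_iff_two_le_count.mp hdup
        have hsp : (p.takeUntil x hx).length + (p.dropUntil x hx).length = p.length := by
          rw [← Walk.length_append, p.take_spec hx]
        have hcount1 : (p.takeUntil x hx).support.count x = 1 :=
          p.count_support_takeUntil_eq_one hx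
        have hsupp : p.support = (p.takeUntil x hx).support ++ (p.dropUntil x hx).support.tail := by
          rw [← Walk.support_append, p.take_spec hx]
        have hx2 : x ∈ (p.dropUntil x hx).support.tail := by
          rw [← List.count_pos_iff]
          rw [hsupp, List.count_append] at hcount
          omega
        obtain ⟨c, rest, hc1, hc2⟩ := split_closed (p.dropUntil x hx) hx2
        set w' : G.Walk u u := Walk.cons h ((p.takeUntil x hx).append rest) with hw'
        have hw'len : w'.length = 1 + (p.takeUntil x hx).length + rest.length := by
          rw [hw', Walk.length_cons, Walk.length_append]; omega
        have htot : c.length + w'.length = n := by omega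
        rcases Nat.even_or_odd c.length with hcodd | hcodd
        · have hodd' : Odd w'.length := by
            rw [Nat.even_iff] at hcodd; rw [Nat.odd_iff]; omega
          obtain ⟨y, c', hc', hcl⟩ := ih w'.length (by omega) hodd' w' rfl
          exact ⟨y, c', hc', by omega⟩
        · obtain ⟨y, c', hc', hcl⟩ := ih c.length (by omega) hcodd c rfl
          exact ⟨y, c', hc', by omega⟩

/-- Two distinct paths with the same endpoints give a cycle of length at most the
sum of their lengths. -/
lemma exists_cycle_of_two_paths [DecidableEq V] {a b : V} (p q : G.Walk a b)
    (hp : p.IsPath) (hq : q.IsPath) (hne : p ≠ q) :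
    ∃ (x : V) (c : G.Walk x x), c.IsCycle ∧ c.length ≤ p.length + q.length := by
  classical
  set H : SimpleGraph V := SimpleGraph.fromEdgeSet {e | e ∈ p.edges ∨ e ∈ q.edges} with hH
  have hmemH : ∀ {e : Sym2 V}, (e ∈ p.edges ∨ e ∈ q.edges) → e ∈ H.edgeSet := by
    intro e he
    rw [hH, SimpleGraph.edgeSet_fromEdgeSet]
    refine ⟨he, ?_⟩
    rcases he with he | he
    · exact G.not_isDiag_of_mem_edgeSet (p.edges_subset_edgeSet he)
    · exact G.not_isDiag_of_mem_edgeSet (q.edges_subset_edgeSet he)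
  have hpe : ∀ e ∈ p.edges, e ∈ H.edgeSet := fun e he => hmemH (Or.inl he)
  have hqe : ∀ e ∈ q.edges, e ∈ H.edgeSet := fun e he => hmemH (Or.inr he)
  have hle : H ≤ G := by
    intro x y hxy
    rw [hH, SimpleGraph.fromEdgeSet_adj] at hxy
    rcases hxy.1 with hh | hh
    · exact p.adj_of_mem_edges hh
    · exact q.adj_of_mem_edges hh
  have hne' : p.transfer H hpe ≠ q.transfer H hqe := by
    intro hcon
    apply hne
    have := congrArg
      (fun w : H.Walk a b => w.transfer G (fun e he => SimpleGraph.edgeSet_mono hle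
        (w.edges_subset_edgeSet he))) hcon
    simpa only [Walk.transfer_transfer, Walk.transfer_self] using this
  have hnac : ¬ H.IsAcyclic := by
    intro hac
    exact hne' (congrArg Subtype.val
      (SimpleGraph.isAcyclic_iff_path_unique.mp hac
        ⟨p.transfer H hpe, hp.transfer hpe⟩ ⟨q.transfer H hqe, hq.transfer hqe⟩))
  have hex : ∃ (x : V) (c : H.Walk x x), c.IsCycle := by
    by_contra hcon
    push_neg at hcon
    exact hnac fun v c hc => hcon v c hc
  obtain ⟨x, c, hc⟩ := hex
  refine ⟨x, c.mapLe hle, hc.mapLe hle, ?_⟩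
  have hnodup : c.edges.Nodup := hc.isCircuit.isTrail.edges_nodup
  have hsub : c.edges.toFinset ⊆ p.edges.toFinset ∪ q.edges.toFinset := by
    intro e he
    rw [List.mem_toFinset] at he
    have := c.edges_subset_edgeSet he
    rw [hH, SimpleGraph.edgeSet_fromEdgeSet] at this
    rcases this.1 with hh | hh
    · exact Finset.mem_union_left _ (List.mem_toFinset.mpr hh)
    · exact Finset.mem_union_right _ (List.mem_toFinset.mpr hh)
  have hlen : c.length ≤ p.length + q.length := by
    have h1 : c.edges.toFinset.card = c.length := by
      rw [List.toFinset_card_of_nodup hnodup, Walk.length_edges]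
    have h2 : c.edges.toFinset.card ≤ p.edges.toFinset.card + q.edges.toFinset.card :=
      (Finset.card_le_card hsub).trans (Finset.card_union_le _ _)
    have h3 : p.edges.toFinset.card ≤ p.length := by
      rw [← p.length_edges]; exact List.toFinset_card_le _
    have h4 : q.edges.toFinset.card ≤ q.length := by
      rw [← q.length_edges]; exact List.toFinset_card_le _
    omega
  simpa [Walk.mapLe, Walk.length_map] using hlen

lemma dist_le_dist_add_one {a b c : V} (hr : G.Reachable a b) (h : G.Adj b c) :
    G.dist a c ≤ G.dist a b + 1 := by
  obtain ⟨w, hw⟩ := hr.exists_walk_length_eq_dist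
  have := SimpleGraph.dist_le (w.concat h)
  rwa [Walk.length_concat, hw] at this

/-- Two adjacent vertices cannot be at the same small distance from a vertex `z`. -/
lemma not_adj_dist_eq [DecidableEq V] (s : ℕ)
    (hcyc : ∀ (x : V) (c : G.Walk x x), c.IsCycle → 2 * s + 2 ≤ c.length)
    {z x y : V} (hxy : G.Adj x y) (hzx : G.Reachable z x) (hd : G.dist z x = G.dist z y)
    (hds : G.dist z x ≤ s) : False := by
  obtain ⟨p, hp⟩ := hzx.exists_walk_length_eq_dist
  obtain ⟨q, hq⟩ := (hzx.trans hxy.reachable).exists_walk_length_eq_dist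
  set w : G.Walk z z := p.append (Walk.cons hxy q.reverse) with hw
  have hwlen : w.length = 2 * G.dist z x + 1 := by
    rw [hw, Walk.length_append, Walk.length_cons, Walk.length_reverse, hp, hq, ← hd]
    omega
  have hodd : Odd w.length := by rw [Nat.odd_iff, hwlen]; omega
  obtain ⟨x', c, hc, hcl⟩ := exists_cycle_of_odd_closed_walk w.length hodd w rfl
  have := hcyc x' c hc
  omega

/-- A vertex has at most one neighbor strictly closer to `z` (within the girth radius). -/
lemma not_two_parents [DecidableEq V] (s : ℕ)
    (hcyc : ∀ (x : V) (c : G.Walk x x), c.IsCycle → 2 * s + 2 ≤ c.length)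
    {z w x y : V} (hwx : G.Adj w x) (hwy : G.Adj w y) (hne : x ≠ y)
    (hzx : G.Reachable z x) (hzy : G.Reachable z y)
    (hdx : G.dist z x + 1 = G.dist z w) (hdy : G.dist z y + 1 = G.dist z w)
    (hds : G.dist z w ≤ s) : False := by
  obtain ⟨p, hp, hpl⟩ := hzx.exists_path_of_dist
  obtain ⟨q, hq, hql⟩ := hzy.exists_path_of_dist
  have hwp : w ∉ p.support := by
    intro hmem
    have h1 := SimpleGraph.dist_le (p.takeUntil w hmem)
    have h2 := p.length_takeUntil_le hmem
    omega
  have hwq : w ∉ q.support := by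
    intro hmem
    have h1 := SimpleGraph.dist_le (q.takeUntil w hmem)
    have h2 := q.length_takeUntil_le hmem
    omega
  set P : G.Walk z w := (Walk.cons hwx p.reverse).reverse with hP
  set Q : G.Walk z w := (Walk.cons hwy q.reverse).reverse with hQ
  have hPpath : P.IsPath := by
    apply Walk.IsPath.reverse
    exact hp.reverse.cons (by rwa [Walk.support_reverse, List.mem_reverse])
  have hQpath : Q.IsPath := by
    apply Walk.IsPath.reverse
    exact hq.reverse.cons (by rwa [Walk.support_reverse, List.mem_reverse])
  have hPlen : P.length = G.dist z x + 1 := by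
    rw [hP, Walk.length_reverse, Walk.length_cons, Walk.length_reverse, hpl]
  have hQlen : Q.length = G.dist z y + 1 := by
    rw [hQ, Walk.length_reverse, Walk.length_cons, Walk.length_reverse, hql]
  have hPQ : P ≠ Q := by
    intro hcon
    apply hne
    have h1 := congrArg (fun (w : G.Walk z w) => w.reverse.getVert 1) hcon
    simp only [hP, hQ, Walk.reverse_reverse] at h1
    rwa [Walk.getVert_cons_succ, Walk.getVert_cons_succ, Walk.getVert_zero,
      Walk.getVert_zero] at h1
  obtain ⟨x', c, hc, hcl⟩ := exists_cycle_of_two_paths P Q hPpath hQpath hPQ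
  have := hcyc x' c hc
  omega

end MooreAux

open SimpleGraph Walk in
/-- Moore bound, odd case: any `(r+1)`-regular graph with girth at least `t+1`,
`t = 2s+1`, has at least `2 ∑_{i=0}^{s} r^i` vertices. -/
theorem moore_bound_odd {V : Type*} [Fintype V] [Nonempty V] [DecidableEq V]
    (G : SimpleGraph V) [DecidableRel G.Adj] (r s t : ℕ) (hr : 1 ≤ r)
    (ht : t = 2 * s + 1)
    (hreg : G.IsRegularOfDegree (r + 1))
    (hgirth : ((t + 1 : ℕ) : ℕ∞) ≤ G.girth) :
    2 * ∑ i ∈ Finset.range (s + 1), r ^ i ≤ Fintype.card V := by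
  classical
  subst ht
  -- every cycle has length at least 2s+2
  have hcyc : ∀ (x : V) (c : G.Walk x x), c.IsCycle → 2 * s + 2 ≤ c.length := by
    intro x c hc
    by_cases hac : G.IsAcyclic
    · exact absurd hc (hac c)
    · have hnetop : G.egirth ≠ ⊤ := by rwa [Ne, SimpleGraph.egirth_eq_top]
      have hgn : 2 * s + 2 ≤ G.girth := by
        have : ((2 * s + 1 + 1 : ℕ) : ℕ∞) ≤ (G.girth : ℕ∞) := hgirth
        exact_mod_cast this
      have h1 : ((2 * s + 2 : ℕ) : ℕ∞) ≤ G.egirth := by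
        rw [← ENat.coe_toNat hnetop]
        exact_mod_cast hgn
      have := SimpleGraph.le_egirth.mp h1 x c hc
      exact_mod_cast this
  obtain ⟨u⟩ := (inferInstance : Nonempty V)
  have hdegpos : 0 < (G.neighborFinset u).card := by
    rw [SimpleGraph.card_neighborFinset_eq_degree, hreg u]; omega
  obtain ⟨v, hv⟩ := Finset.card_pos.mp hdegpos
  have huv : G.Adj u v := (SimpleGraph.mem_neighborFinset _ _ _).mp hv
  -- the "spheres" around the edge
  let F : V → V → ℕ → Finset V := fun a b i =>
    Finset.univ.filter fun x => G.Reachable a x ∧ G.dist a x = i ∧ G.dist b x = i + 1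
  have hmemF : ∀ (a b : V) (i : ℕ) (x : V),
      x ∈ F a b i ↔ (G.Reachable a x ∧ G.dist a x = i ∧ G.dist b x = i + 1) := by
    intro a b i x; simp [F]
  -- growth step
  have hstep : ∀ a b, G.Adj a b → ∀ i, i < s →
      r * (F a b i).card ≤ (F a b (i + 1)).card := by
    intro a b hab i hi
    have hkey : ∀ w ∈ F a b i, r ≤ (G.neighborFinset w ∩ F a b (i + 1)).card := by
      intro w hw
      obtain ⟨hra, hda, hdb⟩ := (hmemF a b i w).mp hw
      have hclaim : ∀ x, x ∈ G.neighborFinset w \ F a b (i + 1) →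
          G.Reachable b x ∧ G.dist b x + 1 = G.dist b w := by
        intro x hx
        rw [Finset.mem_sdiff, SimpleGraph.mem_neighborFinset] at hx
        obtain ⟨hadj, hnF⟩ := hx
        have hrx : G.Reachable a x := hra.trans hadj.reachable
        have hrbx : G.Reachable b x := hab.symm.reachable.trans hrx
        have hrbw : G.Reachable b w := hab.symm.reachable.trans hra
        have hub : G.dist a x ≤ i + 1 := by
          have := MooreAux.dist_le_dist_add_one hra hadj; omega
        have hlb : i ≤ G.dist a x + 1 := by
          have := MooreAux.dist_le_dist_add_one hrx hadj.symm; omega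
        have hubb : G.dist b x ≤ i + 2 := by
          have := MooreAux.dist_le_dist_add_one hrbw hadj; omega
        have hlbb : i ≤ G.dist b x := by
          have := MooreAux.dist_le_dist_add_one hrbx hadj.symm; omega
        have hne1 : G.dist b x ≠ i + 1 := by
          intro hbad
          exact MooreAux.not_adj_dist_eq s hcyc hadj.symm hrbx (by omega) (by omega)
        have hne2 : G.dist b x ≠ i + 2 := by
          intro hbad
          -- then dist a x = i + 1 and x would be in F a b (i+1)
          have h1 : G.dist b x ≤ G.dist a x + 1 := by
            obtain ⟨wk, hwk⟩ := hrx.exists_walk_length_eq_dist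
            have := SimpleGraph.dist_le (Walk.cons hab.symm wk)
            rw [Walk.length_cons, hwk] at this
            omega
          have h2 : G.dist a x = i + 1 := by omega
          exact hnF ((hmemF a b (i + 1) x).mpr ⟨hrx, h2, by omega⟩)
        exact ⟨hrbx, by omega⟩
      have hbadcard : (G.neighborFinset w \ F a b (i + 1)).card ≤ 1 := by
        rw [Finset.card_le_one]
        intro x hx y hy
        by_contra hnexy
        obtain ⟨hrbx, hdx⟩ := hclaim x hx
        obtain ⟨hrby, hdy⟩ := hclaim y hy
        have hadjx : G.Adj w x := (SimpleGraph.mem_neighborFinset _ _ _).mp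
          (Finset.mem_sdiff.mp hx).1
        have hadjy : G.Adj w y := (SimpleGraph.mem_neighborFinset _ _ _).mp
          (Finset.mem_sdiff.mp hy).1
        exact MooreAux.not_two_parents s hcyc hadjx hadjy hnexy hrbx hrby hdx hdy (by omega)
      have hsplit := Finset.card_inter_add_card_sdiff (G.neighborFinset w) (F a b (i + 1))
      have hdeg : (G.neighborFinset w).card = r + 1 := by
        rw [SimpleGraph.card_neighborFinset_eq_degree]; exact hreg w
      omega
    have hdisj : ∀ w1 ∈ F a b i, ∀ w2 ∈ F a b i, w1 ≠ w2 →
        Disjoint (G.neighborFinset w1 ∩ F a b (i + 1))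
          (G.neighborFinset w2 ∩ F a b (i + 1)) := by
      intro w1 h1 w2 h2 hne12
      rw [Finset.disjoint_left]
      intro x hx1 hx2
      obtain ⟨hn1, hxF⟩ := Finset.mem_inter.mp hx1
      obtain ⟨hn2, _⟩ := Finset.mem_inter.mp hx2
      have hadj1 : G.Adj x w1 := ((SimpleGraph.mem_neighborFinset _ _ _).mp hn1).symm
      have hadj2 : G.Adj x w2 := ((SimpleGraph.mem_neighborFinset _ _ _).mp hn2).symm
      obtain ⟨hr1, hd1, _⟩ := (hmemF a b i w1).mp h1
      obtain ⟨hr2, hd2, _⟩ := (hmemF a b i w2).mp h2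
      obtain ⟨hrx, hdx, _⟩ := (hmemF a b (i + 1) x).mp hxF
      exact absurd (MooreAux.not_two_parents s hcyc hadj1 hadj2 hne12 hr1 hr2
        (by omega) (by omega) (by omega)) not_false
    calc r * (F a b i).card = ∑ _w ∈ F a b i, r := by
          rw [Finset.sum_const, smul_eq_mul, mul_comm]
      _ ≤ ∑ w ∈ F a b i, (G.neighborFinset w ∩ F a b (i + 1)).card :=
          Finset.sum_le_sum hkey
      _ = ((F a b i).biUnion fun w => G.neighborFinset w ∩ F a b (i + 1)).card :=
          (Finset.card_biUnion hdisj).symm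
      _ ≤ (F a b (i + 1)).card := by
          apply Finset.card_le_card
          intro x hx
          rw [Finset.mem_biUnion] at hx
          obtain ⟨w, _, hx⟩ := hx
          exact (Finset.mem_inter.mp hx).2
  -- base and powers
  have hpow : ∀ a b, G.Adj a b → ∀ i, i ≤ s → r ^ i ≤ (F a b i).card := by
    intro a b hab i
    induction i with
    | zero =>
      intro _
      have hd1 : G.dist b a = 1 := SimpleGraph.dist_eq_one_iff_adj.mpr hab.symm
      have hmem : a ∈ F a b 0 := (hmemF a b 0 a).mpr
        ⟨SimpleGraph.Reachable.refl a, SimpleGraph.dist_self, by simp [hd1]⟩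
      have hpos := Finset.card_pos.mpr ⟨a, hmem⟩
      simpa using hpos
    | succ i ihi =>
      intro hi
      calc r ^ (i + 1) = r * r ^ i := by ring
        _ ≤ r * (F a b i).card := Nat.mul_le_mul_left r (ihi (by omega))
        _ ≤ (F a b (i + 1)).card := hstep a b hab i (by omega)
  -- assemble
  set S : Finset V := (Finset.range (s + 1)).biUnion (fun i => F u v i ∪ F v u i) with hS
  have hdisjS : ∀ i ∈ Finset.range (s + 1), ∀ j ∈ Finset.range (s + 1), i ≠ j →
      Disjoint (F u v i ∪ F v u i) (F u v j ∪ F v u j) := by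
    intro i _ j _ hij
    rw [Finset.disjoint_left]
    intro x hx1 hx2
    rw [Finset.mem_union] at hx1 hx2
    rcases hx1 with hx1 | hx1 <;> rcases hx2 with hx2 | hx2 <;>
      [obtain ⟨_, e1, e2⟩ := (hmemF u v i x).mp hx1; obtain ⟨_, e1, e2⟩ := (hmemF u v i x).mp hx1;
       obtain ⟨_, e1, e2⟩ := (hmemF v u i x).mp hx1; obtain ⟨_, e1, e2⟩ := (hmemF v u i x).mp hx1] <;>
      [obtain ⟨_, e3, e4⟩ := (hmemF u v j x).mp hx2; obtain ⟨_, e3, e4⟩ := (hmemF v u j x).mp hx2;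
       obtain ⟨_, e3, e4⟩ := (hmemF u v j x).mp hx2; obtain ⟨_, e3, e4⟩ := (hmemF v u j x).mp hx2] <;>
      omega
  have hdisjUV : ∀ i, Disjoint (F u v i) (F v u i) := by
    intro i
    rw [Finset.disjoint_left]
    intro x hx1 hx2
    obtain ⟨_, e1, e2⟩ := (hmemF u v i x).mp hx1
    obtain ⟨_, e3, e4⟩ := (hmemF v u i x).mp hx2
    omega
  calc 2 * ∑ i ∈ Finset.range (s + 1), r ^ i
      = ∑ i ∈ Finset.range (s + 1), 2 * r ^ i := by rw [Finset.mul_sum]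
    _ ≤ ∑ i ∈ Finset.range (s + 1), (F u v i ∪ F v u i).card := by
        apply Finset.sum_le_sum
        intro i hi
        rw [Finset.mem_range] at hi
        rw [Finset.card_union_of_disjoint (hdisjUV i)]
        have h1 := hpow u v huv i (by omega)
        have h2 := hpow v u huv.symm i (by omega)
        omega
    _ = S.card := (Finset.card_biUnion hdisjS).symm
    _ ≤ Fintype.card V := by rw [← Finset.card_univ]; exact Finset.card_le_univ S
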